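/- For the problem of maximizing ∑_{i=1}^N r_i over nonnegative rates r subject to ∑_{i=1}^j g⁻¹(r_i) ≤ ∑_{i=1}^j E_i and ∑_{i=1}^j φ(r_i) ≤ ∑_{i=1}^j (Ē_i + α H_i) for all j ≤ N, where g⁻¹ is strictly convex increasing and φ is strictly convex increasing: any optimal solution r* satisfies r*_i ≤ r*_{i+1} for all i = 1,...,N-1. -/

import Mathlib

open Finset

lemma convex_eps (f : ℝ → ℝ) (hconv : ConvexOn ℝ (Set.Ici 0) f)
    {m b C : ℝ} (hm : 0 ≤ m) (hmb : m < b) (hC : f m < C) (hfb : f m ≤ f b) :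
    ∃ ε, 0 < ε ∧ ∀ δ, 0 < δ → δ ≤ ε → f (m + δ) ≤ C := by
  have hbm : 0 < b - m := by linarith
  have hden : 0 < f b - f m + 1 := by linarith
  refine ⟨min (b - m) ((b - m) * (C - f m) / (f b - f m + 1)), ?_, ?_⟩
  · exact lt_min hbm (div_pos (mul_pos hbm (by linarith)) hden)
  · intro δ hδ hδε
    have hδ1 : δ ≤ b - m := le_trans hδε (min_le_left _ _)
    have hδ2 : δ ≤ (b - m) * (C - f m) / (f b - f m + 1) := le_trans hδε (min_le_right _ _)
    set t := δ / (b - m) with ht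
    have ht0 : 0 < t := div_pos hδ hbm
    have ht1 : t ≤ 1 := by rw [ht, div_le_one hbm]; exact hδ1
    have hcomb : m + δ = (1 - t) * m + t * b := by
      field_simp [ht]
      rw [ht]
      linear_combination (-1 : ℝ) * (div_mul_cancel₀ δ hbm.ne' : δ / (b - m) * (b - m) = δ)
    have hb0 : (0:ℝ) ≤ b := le_trans hm hmb.le
    have := hconv.2 (Set.mem_Ici.2 hm) (Set.mem_Ici.2 hb0) (by linarith : (0:ℝ) ≤ 1 - t)
      ht0.le (by ring)
    simp only [smul_eq_mul] at this
    rw [← hcomb] at this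
    have htC : t ≤ (C - f m) / (f b - f m + 1) := by
      rw [ht, div_le_div_iff₀ hbm hden]
      calc δ * (f b - f m + 1) ≤ ((b - m) * (C - f m) / (f b - f m + 1)) * (f b - f m + 1) := by
            exact mul_le_mul_of_nonneg_right hδ2 hden.le
        _ = (C - f m) * (b - m) := by field_simp
    have h1 : t * (f b - f m) ≤ C - f m := by
      have := mul_le_mul_of_nonneg_right htC (by linarith : (0:ℝ) ≤ f b - f m)
      have h2 : (C - f m) * (f b - f m) / (f b - f m + 1) ≤ C - f m := by
        rw [div_le_iff₀ hden]
        nlinarith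
      have h3 : t * (f b - f m) = δ * (f b - f m) / (b - m) := by rw [ht]; ring
      have h4 : (C - f m) / (f b - f m + 1) * (f b - f m) = (C - f m) * (f b - f m) / (f b - f m + 1) := by ring
      linarith
    nlinarith [this]

/-- Lemma 2: the optimal rates of problem (3) are nondecreasing in time. -/
theorem stmt_2 (N : ℕ) (hN : 0 < N)
    (E Ebar H : Fin N → ℝ)
    (hE : ∀ i, 0 ≤ E i) (hEbar : ∀ i, 0 ≤ Ebar i) (hH : ∀ i, 0 ≤ H i)
    (α : ℝ) (hα0 : 0 ≤ α) (hα1 : α ≤ 1)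
    (ginv φ : ℝ → ℝ)
    (hgconv : StrictConvexOn ℝ (Set.Ici 0) ginv)
    (hgmono : StrictMonoOn ginv (Set.Ici 0))
    (hφconv : StrictConvexOn ℝ (Set.Ici 0) φ)
    (hφmono : StrictMonoOn φ (Set.Ici 0))
    (r : Fin N → ℝ)
    (hfeas : (∀ i, 0 ≤ r i) ∧
      (∀ j : Fin N, ∑ i ∈ Iic j, ginv (r i) ≤ ∑ i ∈ Iic j, E i) ∧
      (∀ j : Fin N, ∑ i ∈ Iic j, φ (r i) ≤ ∑ i ∈ Iic j, (Ebar i + α * H i)))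
    (hopt : ∀ r' : Fin N → ℝ,
      ((∀ i, 0 ≤ r' i) ∧
        (∀ j : Fin N, ∑ i ∈ Iic j, ginv (r' i) ≤ ∑ i ∈ Iic j, E i) ∧
        (∀ j : Fin N, ∑ i ∈ Iic j, φ (r' i) ≤
          ∑ i ∈ Iic j, (Ebar i + α * H i))) →
      ∑ i, r' i ≤ ∑ i, r i) :
    Monotone r := by
  obtain ⟨n, rfl⟩ : ∃ n, N = n + 1 := ⟨N - 1, (Nat.succ_pred_eq_of_pos hN).symm⟩
  rw [Fin.monotone_iff_le_succ]
  intro p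
  by_contra hcon
  push_neg at hcon
  set k : Fin (n + 1) := p.castSucc with hkdef
  set k' : Fin (n + 1) := p.succ with hk'def
  have hkk' : k < k' := Fin.castSucc_lt_succ (i := p)
  have hne : k ≠ k' := hkk'.ne
  set a : ℝ := r k' with hadef
  set b : ℝ := r k with hbdef
  have hab : a < b := hcon
  have h0a : 0 ≤ a := hfeas.1 k'
  have h0b : 0 ≤ b := hfeas.1 k
  set m : ℝ := (a + b) / 2 with hmdef
  have h0m : 0 ≤ m := by positivity
  have hmb : m < b := by rw [hmdef]; linarith
  have ham : a < m := by rw [hmdef]; linarith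
  -- strict midpoint inequality
  have hmid : ∀ f : ℝ → ℝ, StrictConvexOn ℝ (Set.Ici 0) f → 2 * f m < f a + f b := by
    intro f hf
    have := hf.2 (Set.mem_Ici.2 h0a) (Set.mem_Ici.2 h0b) hab.ne
      (by norm_num : (0:ℝ) < 1/2) (by norm_num : (0:ℝ) < 1/2) (by norm_num)
    simp only [smul_eq_mul] at this
    have hm' : (1/2 : ℝ) * a + (1/2 : ℝ) * b = m := by rw [hmdef]; ring
    rw [hm'] at this
    linarith
  have hgmid := hmid ginv hgconv
  have hφmid := hmid φ hφconv
  have hgmb : ginv m ≤ ginv b := (hgmono (Set.mem_Ici.2 h0m) (Set.mem_Ici.2 h0b) hmb).le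
  have hφmb : φ m ≤ φ b := (hφmono (Set.mem_Ici.2 h0m) (Set.mem_Ici.2 h0b) hmb).le
  obtain ⟨ε₁, hε₁, hg⟩ := convex_eps ginv hgconv.convexOn h0m hmb
    (by linarith : ginv m < ginv a + ginv b - ginv m) hgmb
  obtain ⟨ε₂, hε₂, hφ'⟩ := convex_eps φ hφconv.convexOn h0m hmb
    (by linarith : φ m < φ a + φ b - φ m) hφmb
  set δ : ℝ := min ε₁ ε₂ with hδdef
  have hδ0 : 0 < δ := lt_min hε₁ hε₂
  have hgδ : ginv (m + δ) ≤ ginv a + ginv b - ginv m := hg δ hδ0 (min_le_left _ _)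
  have hφδ : φ (m + δ) ≤ φ a + φ b - φ m := hφ' δ hδ0 (min_le_right _ _)
  set r' : Fin (n + 1) → ℝ := Function.update (Function.update r k m) k' (m + δ) with hr'def
  have hr'k' : r' k' = m + δ := by rw [hr'def]; simp
  have hr'k : r' k = m := by
    rw [hr'def, Function.update_of_ne hne, Function.update_self]
  have hr'o : ∀ i, i ≠ k → i ≠ k' → r' i = r i := by
    intro i h1 h2
    rw [hr'def, Function.update_of_ne h2, Function.update_of_ne h1]
  -- key prefix-sum comparison
  have key : ∀ f : ℝ → ℝ, f m ≤ f b → f m + f (m + δ) ≤ f a + f b →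
      ∀ j : Fin (n + 1), ∑ i ∈ Iic j, f (r' i) ≤ ∑ i ∈ Iic j, f (r i) := by
    intro f h1 h2 j
    have hsum : ∑ i ∈ Iic j, (f (r i) - f (r' i)) =
        ∑ i ∈ Iic j ∩ {k, k'}, (f (r i) - f (r' i)) := by
      refine (Finset.sum_subset (Finset.inter_subset_left) ?_).symm
      intro x hx hx2
      have hxk : x ≠ k ∧ x ≠ k' := by
        constructor <;> intro h <;> subst h <;>
          exact hx2 (Finset.mem_inter.2 ⟨hx, by simp⟩)
      rw [hr'o x hxk.1 hxk.2]
      ring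
    have hnn : 0 ≤ ∑ i ∈ Iic j, (f (r i) - f (r' i)) := by
      rw [hsum]
      by_cases hk' : k' ∈ Iic j
      · have hk : k ∈ Iic j := by
          rw [Finset.mem_Iic] at *
          exact le_trans hkk'.le hk'
        have : Iic j ∩ {k, k'} = {k, k'} := by
          apply Finset.inter_eq_right.2
          intro x hx
          rcases Finset.mem_insert.1 hx with h | h
          · subst h; exact hk
          · rw [Finset.mem_singleton.1 h]; exact hk'
        rw [this, Finset.sum_pair hne, hr'k, hr'k']
        rw [← hadef, ← hbdef]
        linarith
      · by_cases hk : k ∈ Iic j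
        · have : Iic j ∩ {k, k'} = {k} := by
            ext x
            simp only [Finset.mem_inter, Finset.mem_insert, Finset.mem_singleton]
            constructor
            · rintro ⟨hx, h | h⟩
              · exact h
              · subst h; exact absurd hx hk'
            · rintro rfl; exact ⟨hk, Or.inl rfl⟩
          rw [this, Finset.sum_singleton, hr'k, ← hbdef]
          linarith
        · have : Iic j ∩ {k, k'} = ∅ := by
            ext x
            simp only [Finset.mem_inter, Finset.mem_insert, Finset.mem_singleton,
              Finset.notMem_empty, iff_false, not_and]
            rintro hx (rfl | rfl)
            · exact hk hx
            · exact hk' hx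
          rw [this, Finset.sum_empty]
    have := Finset.sum_sub_distrib (s := Iic j) (f := fun i => f (r i)) (g := fun i => f (r' i))
    linarith [hnn, this.symm ▸ hnn]
  -- feasibility of r'
  have hfeas' : (∀ i, 0 ≤ r' i) ∧
      (∀ j : Fin (n+1), ∑ i ∈ Iic j, ginv (r' i) ≤ ∑ i ∈ Iic j, E i) ∧
      (∀ j : Fin (n+1), ∑ i ∈ Iic j, φ (r' i) ≤ ∑ i ∈ Iic j, (Ebar i + α * H i)) := by
    refine ⟨?_, ?_, ?_⟩
    · intro i
      by_cases h2 : i = k'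
      · subst h2; rw [hr'k']; linarith
      · by_cases h1 : i = k
        · subst h1; rw [hr'k]; exact h0m
        · rw [hr'o i h1 h2]; exact hfeas.1 i
    · intro j
      exact le_trans (key ginv hgmb (by linarith) j) (hfeas.2.1 j)
    · intro j
      exact le_trans (key φ hφmb (by linarith) j) (hfeas.2.2 j)
  -- objective strictly increases
  have hsum' : ∑ i, r' i = (∑ i, r i) + δ := by
    have h1 : ∑ i, r' i = (m + δ) + ∑ i ∈ Finset.univ.erase k', Function.update r k m i := by
      rw [hr'def, Finset.sum_update_of_mem (Finset.mem_univ k'), Finset.sdiff_singleton_eq_erase]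
    have hkmem : k ∈ Finset.univ.erase k' := Finset.mem_erase.2 ⟨hne, Finset.mem_univ k⟩
    have h2 : ∑ i ∈ Finset.univ.erase k', Function.update r k m i =
        m + ∑ i ∈ (Finset.univ.erase k').erase k, r i := by
      rw [Finset.sum_update_of_mem hkmem, Finset.sdiff_singleton_eq_erase]
    have h3 : ∑ i, r i = r k' + ∑ i ∈ Finset.univ.erase k', r i :=
      (Finset.add_sum_erase _ _ (Finset.mem_univ k')).symm
    have h4 : ∑ i ∈ Finset.univ.erase k', r i = r k + ∑ i ∈ (Finset.univ.erase k').erase k, r i :=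
      (Finset.add_sum_erase _ _ hkmem).symm
    rw [h1, h2, h3, h4, ← hadef, ← hbdef]
    rw [hmdef]
    ring
  have := hopt r' hfeas'
  rw [hsum'] at this
  linarith
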